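/- Let x̄₀ ∈ (0,1) satisfy φ(x̄₀) = x̄₀, and let γ : ℝ → ℝ be differentiable at x̄₀ with γ(x̄₀) = x̄₀ and satisfying γ(y)/f(γ(y)) = g(y) for all y in some neighbourhood of x̄₀. Then γ′(x̄₀) = f(x̄₀)g′(x̄₀)/(1 − g(x̄₀)f′(x̄₀)); moreover γ′(x̄₀) < −1 holds if and only if condition (cond0): f(x̄₀)g′(x̄₀) − f′(x̄₀)g(x̄₀) < −1. -/

import Mathlib

/-- The Hill-type function `f(x) = 1/(a + x^k)` of the reduced Hes1–Notch model. -/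
noncomputable def fHill (a : ℝ) (k : ℕ) : ℝ → ℝ := fun x => 1 / (a + x ^ k)

/-- The Hill-type function `g(x) = 1/(1 + b·x^h)` of the reduced Hes1–Notch model. -/
noncomputable def gHill (b : ℝ) (h : ℕ) : ℝ → ℝ := fun x => 1 / (1 + b * x ^ h)

/-- If `γ` is the implicitly defined stationary-response map, i.e. `γ(y)/f(γ(y)) = g(y)`
near the homogeneous stationary state `x̄₀`, `γ(x̄₀) = x̄₀` and `γ` is differentiable at
`x̄₀`, then `γ′(x̄₀) = f(x̄₀)g′(x̄₀)/(1 − g(x̄₀)f′(x̄₀))`, and `γ′(x̄₀) < −1` holds if and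
only if condition (cond0): `f(x̄₀)g′(x̄₀) − f′(x̄₀)g(x̄₀) < −1`. -/
theorem gamma_deriv_at_fixed_point
    (a b : ℝ) (ha : 0 < a) (hb : 0 < b) (k h : ℕ) (hk : 1 ≤ k) (hh : 1 ≤ h)
    (x0 : ℝ) (hx0 : x0 ∈ Set.Ioo (0 : ℝ) 1)
    (hfix : fHill a k x0 * gHill b h x0 = x0)
    (γ : ℝ → ℝ) (hγdiff : DifferentiableAt ℝ γ x0) (hγfix : γ x0 = x0)
    (hγ : ∀ᶠ y in nhds x0, γ y / fHill a k (γ y) = gHill b h y) :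
    deriv γ x0 =
        fHill a k x0 * deriv (gHill b h) x0 / (1 - gHill b h x0 * deriv (fHill a k) x0) ∧
      (deriv γ x0 < -1 ↔
        fHill a k x0 * deriv (gHill b h) x0 - deriv (fHill a k) x0 * gHill b h x0 < -1) := by
  obtain ⟨hx0p, hx0lt⟩ := hx0
  set c : ℝ := a + x0 ^ k with hcdef
  have hc : 0 < c := by positivity
  set K : ℝ := (k : ℝ) * x0 ^ (k - 1) with hKdef
  have hK : 0 ≤ K := by positivity
  -- derivative of the inner polynomial
  have hpoly : HasDerivAt (fun x : ℝ => a + x ^ k) K x0 :=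
    (hasDerivAt_pow k x0).const_add a
  -- derivative of fHill
  have hfd : HasDerivAt (fHill a k) (-K / c ^ 2) x0 := by
    have h2 := hpoly.inv hc.ne'
    have hfun : fHill a k = fun y : ℝ => (a + y ^ k)⁻¹ := by
      funext y; simp [fHill, one_div]
    rw [hfun, hcdef]
    exact h2
  -- derivative of F(x) = x * (a + x^k)
  have hF : HasDerivAt (fun x : ℝ => x * (a + x ^ k)) (1 * c + x0 * K) x0 :=
    (hasDerivAt_id' (x := x0)).mul hpoly
  set γ' : ℝ := deriv γ x0 with hγ'def
  have hγd : HasDerivAt γ γ' x0 := hγdiff.hasDerivAt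
  have hFγ : HasDerivAt ((fun x : ℝ => x * (a + x ^ k)) ∘ γ) ((1 * c + x0 * K) * γ') x0 := by
    apply HasDerivAt.comp
    · rw [hγfix]; exact hF
    · exact hγd
  have heq : gHill b h =ᶠ[nhds x0] ((fun x : ℝ => x * (a + x ^ k)) ∘ γ) := by
    filter_upwards [hγ] with y hy
    simp only [Function.comp_apply]
    rw [← hy, fHill]
    rw [one_div, div_eq_mul_inv, inv_inv]
  have hgd : HasDerivAt (gHill b h) ((1 * c + x0 * K) * γ') x0 :=
    hFγ.congr_of_eventuallyEq heq
  have hgd' : deriv (gHill b h) x0 = (c + x0 * K) * γ' := by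
    rw [hgd.deriv]; ring
  have hfd' : deriv (fHill a k) x0 = -K / c ^ 2 := hfd.deriv
  have hf0 : fHill a k x0 = 1 / c := rfl
  have hg0 : gHill b h x0 = x0 * c := by
    have := hfix
    rw [hf0] at this
    field_simp at this
    linarith [this]
  have hD : 0 < c + x0 * K := by positivity
  constructor
  · rw [hgd', hfd', hf0, hg0]
    have hden : 1 - x0 * c * (-K / c ^ 2) ≠ 0 := by
      have : 1 - x0 * c * (-K / c ^ 2) = (c + x0 * K) / c := by
        field_simp; ring
      rw [this]
      positivity
    field_simp
    rw [sub_neg_eq_add, mul_div_assoc, div_self hD.ne', mul_one]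
  · rw [hgd', hfd', hf0, hg0]
    have E : 1 / c * ((c + x0 * K) * γ') - -K / c ^ 2 * (x0 * c)
        = ((c + x0 * K) * γ' + x0 * K) / c := by
      field_simp
      ring
    rw [E, div_lt_iff₀ hc]
    rw [show γ' < -1 ↔ (c + x0 * K) * γ' < (c + x0 * K) * (-1) from
      (mul_lt_mul_iff_right₀ hD).symm]
    constructor <;> intro hlt <;> nlinarith [hc, hD, hlt]
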